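/- Let T be a p×p real matrix every eigenvalue of which, viewed over ℂ, has strictly negative real part; let e be the all-ones vector in ℝ^p, t := −T e, and π ∈ ℝ^p with π·e = 1. Then ∫₀^∞ π·(exp(zT) t) dz = 1, i.e., f_Z(z) = π exp(Tz) t is a probability density on (0,∞). -/

import Mathlib

open Matrix MeasureTheory

section PhaseTypeAux

open NormedSpace Filter Set Topology

private lemma decay_tendsto {μ : ℂ} (hμ : μ.re < 0) (j : ℕ) (c : ℂ) :
    Tendsto (fun z : ℝ => Complex.exp (z * μ) * (z ^ j * c)) atTop (𝓝 0) := by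
  have hb : (0:ℝ) < -μ.re := by linarith
  apply squeeze_zero_norm' (a := fun z : ℝ =>
    ((-μ.re)⁻¹ ^ j * (((-μ.re) * z) ^ j * Real.exp (-((-μ.re) * z)))) * ‖c‖)
  · filter_upwards [eventually_ge_atTop (0:ℝ)] with z hz
    have h1 : ‖Complex.exp (z * μ) * (z ^ j * c)‖
        = Real.exp (z * μ.re) * (z ^ j * ‖c‖) := by
      rw [norm_mul, norm_mul, Complex.norm_exp]
      simp [Complex.mul_re, abs_of_nonneg hz]
    have h2 : (-μ.re)⁻¹ ^ j * ((-μ.re * z) ^ j * Real.exp (-(-μ.re * z))) * ‖c‖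
        = Real.exp (z * μ.re) * (z ^ j * ‖c‖) := by
      rw [mul_pow, show -(-μ.re * z) = z * μ.re by ring]
      have h3 : (-μ.re)⁻¹ ^ j * (-μ.re) ^ j = 1 := by
        rw [← mul_pow, inv_mul_cancel₀ hb.ne', one_pow]
      calc (-μ.re)⁻¹ ^ j * ((-μ.re) ^ j * z ^ j * Real.exp (z * μ.re)) * ‖c‖
          = ((-μ.re)⁻¹ ^ j * (-μ.re) ^ j) * (z ^ j * Real.exp (z * μ.re) * ‖c‖) := by ring
        _ = Real.exp (z * μ.re) * (z ^ j * ‖c‖) := by rw [h3]; ring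
    rw [h1, h2]
  · have h1 : Tendsto (fun z : ℝ => (-μ.re) * z) atTop atTop :=
      tendsto_id.const_mul_atTop hb
    have h2 := (Real.tendsto_pow_mul_exp_neg_atTop_nhds_zero j).comp h1
    have h3 := (h2.const_mul ((-μ.re)⁻¹ ^ j)).mul_const ‖c‖
    simpa using h3

private lemma decay_integrable {μ : ℂ} (hμ : μ.re < 0) (j : ℕ) (c : ℂ) :
    IntegrableOn (fun z : ℝ => Complex.exp (z * μ) * (z ^ j * c)) (Ioi 0) := by
  have hb : (0:ℝ) < -μ.re := by linarith
  have hint : IntegrableOn (fun x : ℝ => x ^ ((j:ℝ)) * Real.exp (-(-μ.re) * x ^ (1:ℝ)))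
      (Ioi 0) := integrableOn_rpow_mul_exp_neg_mul_rpow ((by norm_num : (-1:ℝ) < 0).trans_le (Nat.cast_nonneg j)) one_pos hb
  have hint2 := hint.mul_const ‖c‖
  apply Integrable.mono' hint2
  · exact (Continuous.aestronglyMeasurable (by fun_prop)).restrict
  · filter_upwards [ae_restrict_mem measurableSet_Ioi] with z hz
    have hz0 : (0:ℝ) < z := hz
    have h1 : ‖Complex.exp (z * μ) * ((z:ℂ) ^ j * c)‖
        = Real.exp (z * μ.re) * (z ^ j * ‖c‖) := by
      rw [norm_mul, norm_mul, Complex.norm_exp]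
      simp [Complex.mul_re, abs_of_nonneg hz0.le]
    rw [h1, Real.rpow_one, Real.rpow_natCast]
    have : -(-μ.re) * z = z * μ.re := by ring
    rw [this]
    ring_nf
    exact le_of_eq (by ring)

private lemma complex_aux {p : ℕ} (M : Matrix (Fin p) (Fin p) ℂ)
    (hM : ∀ μ ∈ spectrum ℂ M, μ.re < 0) (w : Fin p → ℂ) (v : Fin p → ℂ) :
    Tendsto (fun z : ℝ => w ⬝ᵥ (exp (z • M) *ᵥ v)) atTop (𝓝 0) ∧
      IntegrableOn (fun z : ℝ => w ⬝ᵥ (exp (z • M) *ᵥ v)) (Ioi 0) := by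
  letI : NormedRing (Matrix (Fin p) (Fin p) ℂ) := Matrix.linftyOpNormedRing
  letI : NormedAlgebra ℂ (Matrix (Fin p) (Fin p) ℂ) := Matrix.linftyOpNormedAlgebra
  suffices h : ∀ u : Fin p → ℂ,
      Tendsto (fun z : ℝ => w ⬝ᵥ (exp (z • M) *ᵥ u)) atTop (𝓝 0) ∧
      IntegrableOn (fun z : ℝ => w ⬝ᵥ (exp (z • M) *ᵥ u)) (Ioi 0) from h v
  let S : Submodule ℂ (Fin p → ℂ) :=
    { carrier := {u | Tendsto (fun z : ℝ => w ⬝ᵥ (exp (z • M) *ᵥ u)) atTop (𝓝 0) ∧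
        IntegrableOn (fun z : ℝ => w ⬝ᵥ (exp (z • M) *ᵥ u)) (Ioi 0)}
      zero_mem' := by
        simp only [Set.mem_setOf_eq, Matrix.mulVec_zero, dotProduct_zero]
        exact ⟨tendsto_const_nhds, integrableOn_zero⟩
      add_mem' := by
        rintro a b ⟨ha1, ha2⟩ ⟨hb1, hb2⟩
        simp only [Set.mem_setOf_eq, Matrix.mulVec_add, dotProduct_add]
        exact ⟨by simpa using ha1.add hb1, ha2.add hb2⟩
      smul_mem' := by
        rintro c a ⟨ha1, ha2⟩
        simp only [Set.mem_setOf_eq, Matrix.mulVec_smul, dotProduct_smul, smul_eq_mul]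
        exact ⟨by simpa using ha1.const_mul c, ha2.const_mul c⟩ }
  suffices hle : ∀ μ : ℂ, Module.End.maxGenEigenspace (Matrix.toLinAlgEquiv' M) μ ≤ S by
    have htop := Module.End.iSup_maxGenEigenspace_eq_top (Matrix.toLinAlgEquiv' M)
    have h2 : (⊤ : Submodule ℂ (Fin p → ℂ)) ≤ S := htop ▸ iSup_le hle
    exact fun u => h2 Submodule.mem_top
  intro μ u hu
  by_cases hu0 : u = 0
  · exact hu0 ▸ S.zero_mem
  obtain ⟨k, hk⟩ := (Module.End.mem_maxGenEigenspace _ _ _).mp hu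
  -- μ is in the spectrum of M
  have hμmem : μ ∈ spectrum ℂ M := by
    rw [← AlgEquiv.spectrum_eq (Matrix.toLinAlgEquiv' (R := ℂ) (n := Fin p)) M,
      ← Module.End.hasEigenvalue_iff_mem_spectrum]
    refine Module.End.hasEigenvalue_of_hasGenEigenvalue (k := k) ?_
    rw [Module.End.hasGenEigenvalue_iff, Submodule.ne_bot_iff]
    exact ⟨u, Module.End.mem_genEigenspace_nat.mpr hk, hu0⟩
  have hμ : μ.re < 0 := hM μ hμmem
  -- translate `hk` to matrix language
  set N : Matrix (Fin p) (Fin p) ℂ := M - μ • 1 with hN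
  have hNk : N ^ k *ᵥ u = 0 := by
    have h1 : Matrix.toLinAlgEquiv' M - μ • 1 = Matrix.toLinAlgEquiv' N := by
      simp [hN, map_sub]
    rw [h1] at hk
    have h2 : (Matrix.toLinAlgEquiv' N ^ k) u = Matrix.toLinAlgEquiv' (N ^ k) u := by
      rw [map_pow]
    rw [h2, Matrix.toLinAlgEquiv'_apply] at hk
    exact hk
  -- the linear functional A ↦ w ⬝ᵥ (A *ᵥ u)
  let Φ : Matrix (Fin p) (Fin p) ℂ →ₗ[ℂ] ℂ :=
    { toFun := fun A => w ⬝ᵥ (A *ᵥ u)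
      map_add' := fun A B => by simp [Matrix.add_mulVec, dotProduct_add]
      map_smul' := fun c A => by simp [Matrix.smul_mulVec, dotProduct_smul] }
  let Φc : Matrix (Fin p) (Fin p) ℂ →L[ℂ] ℂ := LinearMap.toContinuousLinearMap Φ
  -- key representation
  have key : ∀ z : ℝ, w ⬝ᵥ (exp (z • M) *ᵥ u) =
      ∑ n ∈ Finset.range k, Complex.exp (z * μ) *
        ((z : ℂ) ^ n * (((n.factorial : ℂ))⁻¹ * (w ⬝ᵥ (N ^ n *ᵥ u)))) := by
    intro z
    have hzsmul : z • M = ((z : ℂ) * μ) • (1 : Matrix (Fin p) (Fin p) ℂ) + (z : ℂ) • N := by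
      have h0 : z • M = (z : ℂ) • M := by
        ext i j; simp [Matrix.smul_apply, Complex.real_smul]
      rw [h0, show M = N + μ • 1 by simp [hN], smul_add, smul_smul, add_comm]
    have hcomm : Commute (((z : ℂ) * μ) • (1 : Matrix (Fin p) (Fin p) ℂ)) ((z : ℂ) • N) :=
      ((Commute.one_left ((z:ℂ) • N)).smul_left _)
    have hsplit : exp (z • M) =
        Complex.exp ((z : ℂ) * μ) • exp ((z : ℂ) • N) := by
      rw [hzsmul, Matrix.exp_add_of_commute _ _ hcomm]
      have h1 : ((z:ℂ) * μ) • (1 : Matrix (Fin p) (Fin p) ℂ)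
          = algebraMap ℂ _ ((z:ℂ) * μ) := (Algebra.algebraMap_eq_smul_one _).symm
      rw [h1]; erw [← algebraMap_exp_comm]; rw [← Complex.exp_eq_exp_ℂ,
        Algebra.algebraMap_eq_smul_one, smul_mul_assoc, one_mul]
    have hexpand : Φ (exp ((z : ℂ) • N)) =
        ∑ n ∈ Finset.range k, (z : ℂ) ^ n * (((n.factorial : ℂ))⁻¹ * (w ⬝ᵥ (N ^ n *ᵥ u))) := by
      have h2 : exp ((z : ℂ) • N) = ∑' n : ℕ, ((n.factorial : ℂ))⁻¹ • ((z:ℂ) • N) ^ n := by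
        rw [exp_eq_tsum ℂ]
      have h3 : Φc (exp ((z : ℂ) • N)) = ∑' n : ℕ, Φc (((n.factorial : ℂ))⁻¹ • ((z:ℂ) • N) ^ n) := by
        rw [h2]
        exact Φc.map_tsum (expSeries_summable' ((z:ℂ) • N))
      have h4 : ∀ n : ℕ, Φc (((n.factorial : ℂ))⁻¹ • ((z:ℂ) • N) ^ n)
          = (z : ℂ) ^ n * (((n.factorial : ℂ))⁻¹ * (w ⬝ᵥ (N ^ n *ᵥ u))) := by
        intro n
        rw [smul_pow, Φc.map_smul, Φc.map_smul]
        have hΦ : Φc (N ^ n) = w ⬝ᵥ (N ^ n *ᵥ u) := rfl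
        rw [hΦ]
        simp only [smul_eq_mul]
        ring
      have h5 : ∀ n ∉ Finset.range k, Φc (((n.factorial : ℂ))⁻¹ • ((z:ℂ) • N) ^ n) = 0 := by
        intro n hn
        rw [h4]
        have hkn : k ≤ n := by simpa using hn
        have h6 : N ^ n *ᵥ u = 0 := by
          rw [show N ^ n = N ^ (n - k) * N ^ k by rw [← pow_add, Nat.sub_add_cancel hkn],
            ← Matrix.mulVec_mulVec, hNk, Matrix.mulVec_zero]
        simp [h6]
      have h7 : Φc (exp ((z : ℂ) • N)) = Φ (exp ((z : ℂ) • N)) := rfl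
      rw [← h7, h3, tsum_eq_sum h5]
      exact Finset.sum_congr rfl fun n _ => h4 n
    calc w ⬝ᵥ (exp (z • M) *ᵥ u)
        = Complex.exp ((z : ℂ) * μ) * Φ (exp ((z : ℂ) • N)) := by
          rw [hsplit, Matrix.smul_mulVec, dotProduct_smul, smul_eq_mul]; rfl
      _ = _ := by rw [hexpand, Finset.mul_sum]
  constructor
  · have := tendsto_finset_sum (Finset.range k)
      (fun n _ => decay_tendsto hμ n (((n.factorial : ℂ))⁻¹ * (w ⬝ᵥ (N ^ n *ᵥ u))))
    refine Tendsto.congr' ?_ (by simpa using this)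
    exact Filter.Eventually.of_forall fun z => (key z).symm
  · have := integrable_finset_sum (μ := volume.restrict (Ioi 0)) (Finset.range k)
      (fun n _ => decay_integrable hμ n (((n.factorial : ℂ))⁻¹ * (w ⬝ᵥ (N ^ n *ᵥ u))))
    exact this.congr (Filter.Eventually.of_forall fun z => (key z).symm)

private lemma bridge {p : ℕ} (T : Matrix (Fin p) (Fin p) ℝ) (w u : Fin p → ℝ) (z : ℝ) :
    ((w ⬝ᵥ (exp (z • T) *ᵥ u) : ℝ) : ℂ) =
      (fun i => (w i : ℂ)) ⬝ᵥ (exp (z • T.map (algebraMap ℝ ℂ)) *ᵥ fun i => (u i : ℂ)) := by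
  letI : NormedRing (Matrix (Fin p) (Fin p) ℝ) := Matrix.linftyOpNormedRing
  letI : NormedAlgebra ℝ (Matrix (Fin p) (Fin p) ℝ) := Matrix.linftyOpNormedAlgebra
  letI : NormedRing (Matrix (Fin p) (Fin p) ℂ) := Matrix.linftyOpNormedRing
  letI : NormedAlgebra ℝ (Matrix (Fin p) (Fin p) ℂ) := Matrix.linftyOpNormedAlgebra
  have hc : Continuous ((algebraMap ℝ ℂ).mapMatrix :
      Matrix (Fin p) (Fin p) ℝ →+* Matrix (Fin p) (Fin p) ℂ) := by
    have hco : (⇑((algebraMap ℝ ℂ).mapMatrix : Matrix (Fin p) (Fin p) ℝ →+* Matrix (Fin p) (Fin p) ℂ))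
        = fun A : Matrix (Fin p) (Fin p) ℝ => A.map (algebraMap ℝ ℂ) :=
      funext fun A => RingHom.mapMatrix_apply _ _
    rw [hco]
    apply continuous_matrix
    intro i j
    exact Complex.continuous_ofReal.comp ((continuous_apply j).comp (continuous_apply i))
  have hmap : (exp (z • T)).map (algebraMap ℝ ℂ) = exp (z • T.map (algebraMap ℝ ℂ)) := by
    letI : NormedAlgebra ℚ (Matrix (Fin p) (Fin p) ℝ) := Matrix.linftyOpNormedAlgebra
    have h1 := map_exp ((algebraMap ℝ ℂ).mapMatrix) hc (z • T)
    rw [RingHom.mapMatrix_apply, RingHom.mapMatrix_apply] at h1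
    have h2 : (z • T).map (algebraMap ℝ ℂ) = z • T.map (algebraMap ℝ ℂ) := by
      ext i j
      simp [Matrix.map_apply, Matrix.smul_apply, Complex.real_smul]
    rw [← h2]; exact h1
  rw [← hmap]
  simp only [dotProduct, Matrix.mulVec, Matrix.map_apply]
  push_cast
  rfl

private lemma hasDerivAt_aux {p : ℕ} (T : Matrix (Fin p) (Fin p) ℝ) (w u : Fin p → ℝ) (x : ℝ) :
    HasDerivAt (fun z : ℝ => w ⬝ᵥ (exp (z • T) *ᵥ u))
      (w ⬝ᵥ (exp (x • T) *ᵥ (T *ᵥ u))) x := by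
  letI : NormedRing (Matrix (Fin p) (Fin p) ℝ) := Matrix.linftyOpNormedRing
  letI : NormedAlgebra ℝ (Matrix (Fin p) (Fin p) ℝ) := Matrix.linftyOpNormedAlgebra
  let Φ : Matrix (Fin p) (Fin p) ℝ →ₗ[ℝ] ℝ :=
    { toFun := fun A => w ⬝ᵥ (A *ᵥ u)
      map_add' := fun A B => by simp [Matrix.add_mulVec, dotProduct_add]
      map_smul' := fun c A => by simp [Matrix.smul_mulVec, dotProduct_smul] }
  let Φc : Matrix (Fin p) (Fin p) ℝ →L[ℝ] ℝ := LinearMap.toContinuousLinearMap Φ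
  have h := Φc.hasFDerivAt.comp_hasDerivAt x (hasDerivAt_exp_smul_const T x)
  have h2 : Φc (exp (x • T) * T) = w ⬝ᵥ (exp (x • T) *ᵥ (T *ᵥ u)) := by
    have : Φc (exp (x • T) * T) = w ⬝ᵥ ((exp (x • T) * T) *ᵥ u) := rfl
    rw [this, ← Matrix.mulVec_mulVec]
  exact h.congr_deriv h2

end PhaseTypeAux

section
open NormedSpace Filter Set Topology

/-- If all complex eigenvalues of `T` have strictly negative real part and `π ⬝ e = 1`,
then `f_Z(z) = π exp(Tz) t` (with `t = -T e`) integrates to 1 on `(0, ∞)`,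
i.e., it is a probability density. -/
theorem phaseType_density_integral_eq_one {p : ℕ} (T : Matrix (Fin p) (Fin p) ℝ)
    (hT : ∀ μ ∈ spectrum ℂ (T.map (algebraMap ℝ ℂ)), μ.re < 0)
    (e : Fin p → ℝ) (he : e = fun _ => 1) (t : Fin p → ℝ) (ht : t = (-T) *ᵥ e)
    (π : Fin p → ℝ) (hπ : π ⬝ᵥ e = 1) :
    ∫ z in Set.Ioi (0 : ℝ), π ⬝ᵥ (NormedSpace.exp (z • T) *ᵥ t) = 1 := by
  have ht' : t = -(T *ᵥ e) := by rw [ht, Matrix.neg_mulVec]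
  set M : Matrix (Fin p) (Fin p) ℂ := T.map (algebraMap ℝ ℂ) with hM
  set wc : Fin p → ℂ := fun i => (π i : ℂ) with hwc
  -- real functions as real parts of complex ones
  have hre1 : ∀ z : ℝ, π ⬝ᵥ (exp (z • T) *ᵥ e)
      = (wc ⬝ᵥ (exp (z • M) *ᵥ fun i => ((e i : ℂ)))).re := by
    intro z; rw [← bridge T π e z]; exact (Complex.ofReal_re _).symm
  have hre2 : ∀ z : ℝ, π ⬝ᵥ (exp (z • T) *ᵥ (T *ᵥ e))
      = (wc ⬝ᵥ (exp (z • M) *ᵥ fun i => (((T *ᵥ e) i : ℂ)))).re := by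
    intro z; rw [← bridge T π (T *ᵥ e) z]; exact (Complex.ofReal_re _).symm
  obtain ⟨htend1, -⟩ := complex_aux M hT wc (fun i => ((e i : ℂ)))
  obtain ⟨-, hint2⟩ := complex_aux M hT wc (fun i => (((T *ᵥ e) i : ℂ)))
  -- tendsto of -g
  have htend : Tendsto (fun z : ℝ => -(π ⬝ᵥ (exp (z • T) *ᵥ e))) atTop (𝓝 0) := by
    have h1 : Tendsto (fun z : ℝ => (wc ⬝ᵥ (exp (z • M) *ᵥ fun i => ((e i : ℂ)))).re)
        atTop (𝓝 0) := by
      have := (Complex.continuous_re.tendsto 0).comp htend1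
      exact this
    have h2 := (h1.congr (fun z => (hre1 z).symm)).neg
    simpa using h2
  -- integrability of the integrand
  have hint : IntegrableOn (fun z : ℝ => π ⬝ᵥ (exp (z • T) *ᵥ t)) (Ioi 0) := by
    have h1 : IntegrableOn
        (fun z : ℝ => (wc ⬝ᵥ (exp (z • M) *ᵥ fun i => (((T *ᵥ e) i : ℂ)))).re) (Ioi 0) :=
      hint2.re
    have h2 := (h1.congr (Filter.Eventually.of_forall fun z => (hre2 z).symm)).neg
    apply h2.congr (Filter.Eventually.of_forall fun z => ?_)
    show -(π ⬝ᵥ (exp (z • T) *ᵥ (T *ᵥ e))) = _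
    rw [ht', Matrix.mulVec_neg, dotProduct_neg]
  -- derivative
  have hderiv : ∀ x ∈ Ici (0:ℝ), HasDerivAt (fun z : ℝ => -(π ⬝ᵥ (exp (z • T) *ᵥ e)))
      (π ⬝ᵥ (exp (x • T) *ᵥ t)) x := by
    intro x _
    have h := (hasDerivAt_aux T π e x).neg
    have h2 : π ⬝ᵥ (exp (x • T) *ᵥ t) = -(π ⬝ᵥ (exp (x • T) *ᵥ (T *ᵥ e))) := by
      rw [ht', Matrix.mulVec_neg, dotProduct_neg]
    rw [h2]
    exact h
  have hFTC := integral_Ioi_of_hasDerivAt_of_tendsto' hderiv hint htend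
  rw [hFTC]
  simp only [zero_smul, exp_zero, Matrix.one_mulVec, hπ]
  norm_num
end
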